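/- Consider the SimGD-O iteration z_{k+1} = z_k − αG(z_k) − β(G(z_k) − G(z_{k−1})) with z_{−1} = z₀, with the choices α = 1/(8R) and β = 2α = 1/(4R). Then for every k ≥ 1, min_{i=0,…,k} ‖G(z_i)‖² ≤ (136 R²/k) ‖z₀ + βG(z₀) − z_⋆‖² ≤ (289 R²/k) ‖z₀ − z_⋆‖², where z_⋆ is any saddle point of L. -/

import Mathlib

open Filter Topology
open scoped RealInnerProductSpace

variable {m n : ℕ}

/-- The squared Euclidean (ℓ²) norm on a product of inner product spaces. -/
noncomputable def prodNormSq {E F : Type*} [NormedAddCommGroup E] [NormedAddCommGroup F]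
    (z : E × F) : ℝ :=
  ‖z.1‖ ^ 2 + ‖z.2‖ ^ 2

/-- The saddle-point (gradient-descent-ascent) operator
`G(x,u) = (∇ₓ L(x,u), −∇ᵤ L(x,u))` of a differentiable function `L`. -/
noncomputable def saddleGrad
    (L : EuclideanSpace ℝ (Fin m) × EuclideanSpace ℝ (Fin n) → ℝ)
    (z : EuclideanSpace ℝ (Fin m) × EuclideanSpace ℝ (Fin n)) :
    EuclideanSpace ℝ (Fin m) × EuclideanSpace ℝ (Fin n) :=
  (gradient (fun x => L (x, z.2)) z.1, -gradient (fun u => L (z.1, u)) z.2)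

/-- `z⋆` is a saddle point of `L`: `L(x⋆,u) ≤ L(x⋆,u⋆) ≤ L(x,u⋆)` for all `x, u`. -/
def IsSaddlePoint
    (L : EuclideanSpace ℝ (Fin m) × EuclideanSpace ℝ (Fin n) → ℝ)
    (zstar : EuclideanSpace ℝ (Fin m) × EuclideanSpace ℝ (Fin n)) : Prop :=
  ∀ x u, L (zstar.1, u) ≤ L zstar ∧ L zstar ≤ L (x, zstar.2)

section FirstOrder

variable {E : Type*} [NormedAddCommGroup E] [InnerProductSpace ℝ E] [CompleteSpace E]

omit [CompleteSpace E] in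
lemma normsq_smul (c : ℝ) (v : E) : ‖c • v‖ ^ 2 = c ^ 2 * ‖v‖ ^ 2 := by
  rw [norm_smul, mul_pow, Real.norm_eq_abs, sq_abs]

lemma gradient_neg' (f : E → ℝ) (x : E) :
    gradient (fun t => -(f t)) x = -gradient f x := by
  unfold gradient
  rw [fderiv_fun_neg, map_neg]

lemma convex_grad_ineq {f : E → ℝ} (hd : Differentiable ℝ f)
    (hc : ConvexOn ℝ Set.univ f) (x y : E) :
    f x + ⟪gradient f x, y - x⟫ ≤ f y := by
  set φ : ℝ → ℝ := f ∘ (AffineMap.lineMap x y) with hφ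
  have hφc : ConvexOn ℝ Set.univ φ := by
    have := hc.comp_affineMap (AffineMap.lineMap x y)
    simpa using this
  have hder : HasDerivAt φ ⟪gradient f x, y - x⟫ 0 := by
    have h2 : HasDerivAt (fun t : ℝ => (AffineMap.lineMap x y) t) (y - x) 0 := by
      have h3 : HasDerivAt (fun t : ℝ => t • (y - x) + x) (y - x) 0 := by
        simpa using ((hasDerivAt_id (0:ℝ)).smul_const (y - x)).add_const x
      refine h3.congr_of_eventuallyEq ?_
      filter_upwards with t
      simp [AffineMap.lineMap_apply_module', add_comm]
    have h1 : HasFDerivAt f (fderiv ℝ f x) ((AffineMap.lineMap x y) (0:ℝ)) := by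
      simpa using (hd _).hasFDerivAt
    have := h1.comp_hasDerivAt 0 h2
    have hval : fderiv ℝ f x (y - x) = ⟪gradient f x, y - x⟫ := by
      unfold gradient
      rw [InnerProductSpace.toDual_symm_apply]
    rw [← hval]
    exact this
  have hslope := hφc.deriv_le_slope (Set.mem_univ (0:ℝ)) (Set.mem_univ (1:ℝ))
    zero_lt_one hder.differentiableAt
  rw [hder.deriv, slope_def_field] at hslope
  have h0 : φ 0 = f x := by simp [hφ]
  have h1 : φ 1 = f y := by simp [hφ]
  rw [h0, h1] at hslope
  have : ⟪gradient f x, y - x⟫ ≤ f y - f x := by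
    simpa using hslope
  linarith

lemma concave_grad_ineq {f : E → ℝ} (hd : Differentiable ℝ f)
    (hc : ConcaveOn ℝ Set.univ f) (x y : E) :
    f y ≤ f x + ⟪gradient f x, y - x⟫ := by
  have h := convex_grad_ineq (f := fun t => -(f t)) hd.neg hc.neg x y
  rw [gradient_neg', inner_neg_left] at h
  linarith

end FirstOrder

section Saddle

variable (L : EuclideanSpace ℝ (Fin m) × EuclideanSpace ℝ (Fin n) → ℝ)

lemma diff_fst (hDiff : Differentiable ℝ L) (u : EuclideanSpace ℝ (Fin n)) :
    Differentiable ℝ (fun x => L (x, u)) :=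
  hDiff.comp (differentiable_id.prodMk (differentiable_const u))

lemma diff_snd (hDiff : Differentiable ℝ L) (x : EuclideanSpace ℝ (Fin m)) :
    Differentiable ℝ (fun u => L (x, u)) :=
  hDiff.comp ((differentiable_const x).prodMk differentiable_id)

lemma saddleGrad_zero
    (zstar : EuclideanSpace ℝ (Fin m) × EuclideanSpace ℝ (Fin n))
    (hzstar : IsSaddlePoint L zstar) : saddleGrad L zstar = 0 := by
  have h1 : gradient (fun x => L (x, zstar.2)) zstar.1 = 0 := by
    have hmin : IsLocalMin (fun x => L (x, zstar.2)) zstar.1 := by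
      apply Filter.Eventually.of_forall
      intro x
      have := (hzstar x zstar.2).2
      simpa using this
    unfold gradient
    rw [hmin.fderiv_eq_zero, map_zero]
  have h2 : gradient (fun u => L (zstar.1, u)) zstar.2 = 0 := by
    have hmax : IsLocalMax (fun u => L (zstar.1, u)) zstar.2 := by
      apply Filter.Eventually.of_forall
      intro u
      have := (hzstar zstar.1 u).1
      simpa using this
    unfold gradient
    rw [hmax.fderiv_eq_zero, map_zero]
  rw [saddleGrad, h1, h2]
  simp

lemma saddleGrad_mono (hDiff : Differentiable ℝ L)
    (hConv : ∀ u, ConvexOn ℝ Set.univ fun x => L (x, u))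
    (hConc : ∀ x, ConcaveOn ℝ Set.univ fun u => L (x, u))
    (z w : EuclideanSpace ℝ (Fin m) × EuclideanSpace ℝ (Fin n)) :
    0 ≤ ⟪(saddleGrad L z).1 - (saddleGrad L w).1, z.1 - w.1⟫
        + ⟪(saddleGrad L z).2 - (saddleGrad L w).2, z.2 - w.2⟫ := by
  have A1 := convex_grad_ineq (diff_fst L hDiff z.2) (hConv z.2) z.1 w.1
  have A2 := convex_grad_ineq (diff_fst L hDiff w.2) (hConv w.2) w.1 z.1
  have B1 := concave_grad_ineq (diff_snd L hDiff z.1) (hConc z.1) z.2 w.2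
  have B2 := concave_grad_ineq (diff_snd L hDiff w.1) (hConc w.1) w.2 z.2
  simp only [saddleGrad]
  rw [inner_sub_left, inner_sub_left, inner_neg_left, inner_neg_left]
  have e1 : ⟪gradient (fun x => L (x, z.2)) z.1, w.1 - z.1⟫
      = -⟪gradient (fun x => L (x, z.2)) z.1, z.1 - w.1⟫ := by
    rw [← inner_neg_right, neg_sub]
  have e2 : ⟪gradient (fun u => L (z.1, u)) z.2, w.2 - z.2⟫
      = -⟪gradient (fun u => L (z.1, u)) z.2, z.2 - w.2⟫ := by
    rw [← inner_neg_right, neg_sub]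
  rw [e1] at A1
  rw [e2] at B1
  linarith

end Saddle

set_option maxHeartbeats 1000000 in
lemma descent' {H : Type*} [NormedAddCommGroup H] [InnerProductSpace ℝ H]
    (R : ℝ) (hR : 0 < R) (α : ℝ) (hα : 0 < α) (hα64 : α ^ 2 * R ^ 2 = 1 / 64)
    (z g : ℕ → H) (zs : H)
    (hiter : ∀ k : ℕ, z (k + 1) = z k - α • g k - (2 * α) • (g k - g (k - 1)))
    (hmono : ∀ k : ℕ, 0 ≤ ⟪g k, z k - zs⟫)
    (hlip : ∀ k : ℕ, ‖g k - g (k - 1)‖ ^ 2 ≤ R ^ 2 * ‖z k - z (k - 1)‖ ^ 2) :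
    ∀ K : ℕ, 13 / 896 * (1 / R ^ 2) * (∑ i ∈ Finset.range K, ‖g i‖ ^ 2)
        + ‖z K + (2 * α) • g (K - 1) - zs‖ ^ 2 + 1 / 28 * ‖z K - z (K - 1)‖ ^ 2
      ≤ ‖z 0 + (2 * α) • g 0 - zs‖ ^ 2 := by
  have hR0 : R ≠ 0 := hR.ne'
  have hcoef : 13 / 896 * (1 / R ^ 2) = 13 / 14 * α ^ 2 := by
    field_simp
    linarith [hα64]
  intro K
  induction K with
  | zero => simp
  | succ K ih =>
    rw [Finset.sum_range_succ]
    simp only [Nat.add_sub_cancel]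
    have step : 13 / 896 * (1 / R ^ 2) * ‖g K‖ ^ 2
        + ‖z (K + 1) + (2 * α) • g K - zs‖ ^ 2 + 1 / 28 * ‖z (K + 1) - z K‖ ^ 2
        ≤ ‖z K + (2 * α) • g (K - 1) - zs‖ ^ 2 + 1 / 28 * ‖z K - z (K - 1)‖ ^ 2 := by
      set A := z K + (2 * α) • g (K - 1) - zs with hA
      have hE1 : z (K + 1) + (2 * α) • g K - zs = A - α • g K := by
        rw [hiter K, hA]; module
      have hE2 : z (K + 1) - z K = -(α • g K + (2 * α) • (g K - g (K - 1))) := by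
        rw [hiter K]; module
      have hs : ‖α • g K‖ ^ 2 = α ^ 2 * ‖g K‖ ^ 2 := normsq_smul _ _
      have hq : ‖(2 * α) • (g K - g (K - 1))‖ ^ 2
          = 4 * (α ^ 2 * ‖g K - g (K - 1)‖ ^ 2) := by rw [normsq_smul]; ring
      have hP0 : ‖z (K + 1) + (2 * α) • g K - zs‖ ^ 2
          = ‖A‖ ^ 2 - 2 * ⟪A, α • g K⟫ + ‖α • g K‖ ^ 2 := by
        rw [hE1, norm_sub_sq_real]
      have hAsplit : A = (z K - zs) + (2 * α) • g (K - 1) := by rw [hA]; module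
      have hAg : ⟪A, α • g K⟫ = α * ⟪z K - zs, g K⟫ + 2 * (α ^ 2 * ⟪g (K - 1), g K⟫) := by
        rw [real_inner_smul_right, hAsplit, inner_add_left, real_inner_smul_left]
        ring
      have hP' : ‖z (K + 1) + (2 * α) • g K - zs‖ ^ 2
          = ‖A‖ ^ 2 - 2 * (α * ⟪z K - zs, g K⟫) - 4 * (α ^ 2 * ⟪g (K - 1), g K⟫)
            + α ^ 2 * ‖g K‖ ^ 2 := by
        rw [hP0, hAg, hs]; ring
      have hI : 0 ≤ ⟪z K - zs, g K⟫ := by rw [real_inner_comm]; exact hmono K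
      have hJ : ‖g K‖ ^ 2 - 1 / 2 * (‖g K - g (K - 1)‖ ^ 2 + ‖g K‖ ^ 2)
          ≤ ⟪g (K - 1), g K⟫ := by
        have h1 : ⟪g (K - 1), g K⟫ = ⟪g K, g K⟫ - ⟪g K - g (K - 1), g K⟫ := by
          rw [inner_sub_left]; ring
        have h2 := real_inner_le_norm (g K - g (K - 1)) (g K)
        have h3 := sq_nonneg (‖g K - g (K - 1)‖ - ‖g K‖)
        have h4 : ⟪g K, g K⟫ = ‖g K‖ ^ 2 := real_inner_self_eq_norm_sq _
        nlinarith
      have hDnew : ‖z (K + 1) - z K‖ ^ 2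
          ≤ 2 * (α ^ 2 * ‖g K‖ ^ 2) + 8 * (α ^ 2 * ‖g K - g (K - 1)‖ ^ 2) := by
        rw [hE2, norm_neg, norm_add_sq_real]
        have h2 := real_inner_le_norm (α • g K) ((2 * α) • (g K - g (K - 1)))
        have h3 := sq_nonneg (‖α • g K‖ - ‖(2 * α) • (g K - g (K - 1))‖)
        nlinarith [hs, hq]
      have hq' := hlip K
      have hfact : 0 ≤ α * ⟪z K - zs, g K⟫ := mul_nonneg hα.le hI
      have hfact2 : 0 ≤ α ^ 2 * (⟪g (K - 1), g K⟫
          - (‖g K‖ ^ 2 - 1 / 2 * (‖g K - g (K - 1)‖ ^ 2 + ‖g K‖ ^ 2))) :=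
        mul_nonneg (sq_nonneg α) (by linarith)
      have hfact3 : α ^ 2 * ‖g K - g (K - 1)‖ ^ 2
          ≤ α ^ 2 * (R ^ 2 * ‖z K - z (K - 1)‖ ^ 2) :=
        mul_le_mul_of_nonneg_left hq' (sq_nonneg α)
      have hfact4 : α ^ 2 * (R ^ 2 * ‖z K - z (K - 1)‖ ^ 2)
          = 1 / 64 * ‖z K - z (K - 1)‖ ^ 2 := by rw [← mul_assoc, hα64]
      rw [hcoef]
      linarith [hP', hfact, hfact2, hDnew, hfact3, hfact4]
    rw [hcoef] at ih step ⊢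
    linarith

set_option maxHeartbeats 2000000 in
theorem stmt_2
    (L : EuclideanSpace ℝ (Fin m) × EuclideanSpace ℝ (Fin n) → ℝ)
    (R : ℝ) (hR : 0 < R)
    (hDiff : Differentiable ℝ L)
    (hConv : ∀ u, ConvexOn ℝ Set.univ fun x => L (x, u))
    (hConc : ∀ x, ConcaveOn ℝ Set.univ fun u => L (x, u))
    (hLip : ∀ z w, prodNormSq (saddleGrad L z - saddleGrad L w) ≤ R ^ 2 * prodNormSq (z - w))
    (zstar : EuclideanSpace ℝ (Fin m) × EuclideanSpace ℝ (Fin n))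
    (hzstar : IsSaddlePoint L zstar)
    (z : ℕ → EuclideanSpace ℝ (Fin m) × EuclideanSpace ℝ (Fin n))
    (hiter : ∀ k : ℕ, z (k + 1)
      = z k - (1 / (8 * R)) • saddleGrad L (z k)
        - (1 / (4 * R)) • (saddleGrad L (z k) - saddleGrad L (z (k - 1)))) :
    ∀ k : ℕ, 1 ≤ k →
      (∃ i ≤ k,
        prodNormSq (saddleGrad L (z i))
          ≤ 136 * R ^ 2 / (k : ℝ)
            * prodNormSq (z 0 + (1 / (4 * R)) • saddleGrad L (z 0) - zstar)) ∧
      136 * R ^ 2 / (k : ℝ)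
          * prodNormSq (z 0 + (1 / (4 * R)) • saddleGrad L (z 0) - zstar)
        ≤ 289 * R ^ 2 / (k : ℝ) * prodNormSq (z 0 - zstar) := by
  have hR0 : R ≠ 0 := hR.ne'
  set ι := (WithLp.linearEquiv 2 ℝ
    (EuclideanSpace ℝ (Fin m) × EuclideanSpace ℝ (Fin n))).symm with hιdef
  have hnorm : ∀ v : EuclideanSpace ℝ (Fin m) × EuclideanSpace ℝ (Fin n),
      prodNormSq v = ‖ι v‖ ^ 2 := by
    intro v
    rw [prodNormSq, WithLp.prod_norm_sq_eq_of_L2]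
    rfl
  have hinner : ∀ a b : EuclideanSpace ℝ (Fin m) × EuclideanSpace ℝ (Fin n),
      ⟪ι a, ι b⟫ = ⟪a.1, b.1⟫ + ⟪a.2, b.2⟫ := fun a b => rfl
  have hb : (1 / (4 * R)) = 2 * (1 / (8 * R)) := by
    field_simp
    ring
  have hαpos : 0 < 1 / (8 * R) := by positivity
  have hα64 : (1 / (8 * R)) ^ 2 * R ^ 2 = 1 / 64 := by
    field_simp
    ring
  have hz0 := saddleGrad_zero L zstar hzstar
  -- descent lemma applied in WithLp 2
  have hdes := descent' R hR (1 / (8 * R)) hαpos hα64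
      (fun k => ι (z k)) (fun k => ι (saddleGrad L (z k))) (ι zstar)
      (by
        intro k
        show ι (z (k + 1)) = _
        rw [hiter k, hb]
        simp only [map_sub, map_smul])
      (by
        intro k
        show (0:ℝ) ≤ ⟪ι (saddleGrad L (z k)), ι (z k) - ι zstar⟫
        rw [← map_sub, hinner]
        have h := saddleGrad_mono L hDiff hConv hConc (z k) zstar
        rw [hz0] at h
        simpa using h)
      (by
        intro k
        show ‖ι (saddleGrad L (z k)) - ι (saddleGrad L (z (k - 1)))‖ ^ 2 ≤ _
        rw [← map_sub, ← map_sub (f := ι), ← hnorm, ← hnorm]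
        exact hLip (z k) (z (k - 1)))
  have hP0eq : prodNormSq (z 0 + (1 / (4 * R)) • saddleGrad L (z 0) - zstar)
      = ‖ι (z 0) + (2 * (1 / (8 * R))) • ι (saddleGrad L (z 0)) - ι zstar‖ ^ 2 := by
    rw [hnorm, hb]
    simp only [map_sub, map_add, map_smul]
  intro k hk
  have hk' : (0:ℝ) < k := by exact_mod_cast hk
  constructor
  · -- first inequality
    obtain ⟨i, hi, hmin⟩ := Finset.exists_min_image (Finset.range k)
      (fun j => ‖ι (saddleGrad L (z j))‖ ^ 2) (Finset.nonempty_range_iff.mpr (by omega))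
    refine ⟨i, (Finset.mem_range.mp hi).le, ?_⟩
    have hsum : (k : ℝ) * ‖ι (saddleGrad L (z i))‖ ^ 2
        ≤ ∑ j ∈ Finset.range k, ‖ι (saddleGrad L (z j))‖ ^ 2 := by
      have := Finset.card_nsmul_le_sum (Finset.range k)
        (fun j => ‖ι (saddleGrad L (z j))‖ ^ 2) (‖ι (saddleGrad L (z i))‖ ^ 2)
        (fun j hj => hmin j hj)
      simpa [Finset.card_range, nsmul_eq_mul] using this
    have hSig : 13 / 896 * (1 / R ^ 2)
        * (∑ j ∈ Finset.range k, ‖ι (saddleGrad L (z j))‖ ^ 2)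
        ≤ ‖ι (z 0) + (2 * (1 / (8 * R))) • ι (saddleGrad L (z 0)) - ι zstar‖ ^ 2 := by
      have h := hdes k
      beta_reduce at h
      have h1 : (0:ℝ) ≤ ‖ι (z k) + (2 * (1 / (8 * R))) • ι (saddleGrad L (z (k - 1)))
          - ι zstar‖ ^ 2 := sq_nonneg _
      have h2 : (0:ℝ) ≤ ‖ι (z k) - ι (z (k - 1))‖ ^ 2 := sq_nonneg _
      linarith
    set P0 := ‖ι (z 0) + (2 * (1 / (8 * R))) • ι (saddleGrad L (z 0)) - ι zstar‖ ^ 2 with hP0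
    have hP0nn : (0:ℝ) ≤ P0 := sq_nonneg _
    have h2 : 13 / 896 * (1 / R ^ 2) * ((k:ℝ) * ‖ι (saddleGrad L (z i))‖ ^ 2) ≤ P0 := by
      refine le_trans ?_ hSig
      apply mul_le_mul_of_nonneg_left hsum
      positivity
    have h3 : (k:ℝ) * ‖ι (saddleGrad L (z i))‖ ^ 2 ≤ 896 / 13 * R ^ 2 * P0 := by
      have hmul := mul_le_mul_of_nonneg_left h2
        (le_of_lt (show (0:ℝ) < 896 / 13 * R ^ 2 by positivity))
      calc (k:ℝ) * ‖ι (saddleGrad L (z i))‖ ^ 2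
          = (896 / 13 * R ^ 2) * (13 / 896 * (1 / R ^ 2)
            * ((k:ℝ) * ‖ι (saddleGrad L (z i))‖ ^ 2)) := by field_simp
        _ ≤ _ := hmul
    rw [hnorm, hP0eq]
    rw [div_mul_eq_mul_div, le_div_iff₀ hk']
    have hRP : (0:ℝ) ≤ R ^ 2 * P0 := by positivity
    nlinarith [h3]
  · -- second inequality
    have h136 : 136 * prodNormSq (z 0 + (1 / (4 * R)) • saddleGrad L (z 0) - zstar)
        ≤ 289 * prodNormSq (z 0 - zstar) := by
      rw [hP0eq, hnorm]
      set A := ι (z 0 - zstar) with hAdef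
      set b := (2 * (1 / (8 * R))) • ι (saddleGrad L (z 0)) with hbdef
      have hsplit : ι (z 0) + (2 * (1 / (8 * R))) • ι (saddleGrad L (z 0)) - ι zstar
          = A + b := by
        rw [hAdef, hbdef, map_sub]; abel
      rw [hsplit]
      have hb2 : ‖b‖ ^ 2 ≤ 1 / 16 * ‖A‖ ^ 2 := by
        rw [hbdef, normsq_smul]
        have hG : ‖ι (saddleGrad L (z 0))‖ ^ 2 ≤ R ^ 2 * ‖A‖ ^ 2 := by
          have h := hLip (z 0) zstar
          rw [hz0, hnorm, hnorm, sub_zero] at h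
          rw [hAdef]
          exact h
        have hc : (2 * (1 / (8 * R))) ^ 2 * R ^ 2 = 1 / 16 := by field_simp; ring
        calc (2 * (1 / (8 * R))) ^ 2 * ‖ι (saddleGrad L (z 0))‖ ^ 2
            ≤ (2 * (1 / (8 * R))) ^ 2 * (R ^ 2 * ‖A‖ ^ 2) := by
              apply mul_le_mul_of_nonneg_left hG (sq_nonneg _)
          _ = 1 / 16 * ‖A‖ ^ 2 := by rw [← mul_assoc, hc]
      have hble : ‖b‖ ≤ ‖A‖ / 4 := by
        nlinarith [norm_nonneg b, norm_nonneg A, hb2]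
      have hexp := norm_add_sq_real A b
      have hCS := real_inner_le_norm A b
      have hprod : ‖A‖ * ‖b‖ ≤ ‖A‖ * (‖A‖ / 4) :=
        mul_le_mul_of_nonneg_left hble (norm_nonneg A)
      nlinarith [sq_nonneg ‖A‖]
    have hpos : (0:ℝ) ≤ R ^ 2 / k := by positivity
    have := mul_le_mul_of_nonneg_left h136 hpos
    have hexpand1 : R ^ 2 / (k:ℝ)
        * (136 * prodNormSq (z 0 + (1 / (4 * R)) • saddleGrad L (z 0) - zstar))
        = 136 * R ^ 2 / (k:ℝ)
        * prodNormSq (z 0 + (1 / (4 * R)) • saddleGrad L (z 0) - zstar) := by ring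
    have hexpand2 : R ^ 2 / (k:ℝ) * (289 * prodNormSq (z 0 - zstar))
        = 289 * R ^ 2 / (k:ℝ) * prodNormSq (z 0 - zstar) := by ring
    linarith [this, hexpand1.symm, hexpand2.symm]
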